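/- arXiv:2310.14797 — 2 statements merged into one kernel-verified Lean document; each statement's English description precedes it below -/
import Mathlib

section
/- Let a_n, b_n (1 ≤ n ≤ N) be complex numbers with |a_n| ≤ b_n (so in particular b_n are nonnegative reals), and let R, S ⊆ ℝ be finite sets. Then Σ_{t ∈ R, s ∈ S} |Σ_{n=1}^{N} a_n n^{i(t-s)}|² ≤ (Σ_{t, t' ∈ R} |Σ_{n=1}^{N} b_n n^{i(t-t')}|²)^{1/2} · (Σ_{s, s' ∈ S} |Σ_{n=1}^{N} b_n n^{i(s-s')}|²)^{1/2}. -/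
open Complex Finset

lemma cc (x y : ℝ) (n : ℕ) :
    Complex.exp (Complex.I * ((x:ℂ) - y) * Real.log n)
      = Complex.exp (Complex.I * x * Real.log n)
        * (starRingEnd ℂ) (Complex.exp (Complex.I * y * Real.log n)) := by
  rw [← Complex.exp_conj, ← Complex.exp_add]
  congr 1
  rw [map_mul, map_mul, Complex.conj_I, Complex.conj_ofReal, Complex.conj_ofReal]
  ring

lemma normsq_sum {ι : Type*} (F : Finset ι) (f : ι → ℂ) :
    (‖∑ i ∈ F, f i‖:ℝ)^2 = (∑ i ∈ F, ∑ j ∈ F, f i * (starRingEnd ℂ) (f j)).re := by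
  have : ∑ i ∈ F, ∑ j ∈ F, f i * (starRingEnd ℂ) (f j)
      = (∑ i ∈ F, f i) * (starRingEnd ℂ) (∑ j ∈ F, f j) := by
    rw [map_sum, Finset.sum_mul_sum]
  rw [this, Complex.mul_conj]
  simp [Complex.sq_norm]

lemma sum4 {M : Type*} [AddCommMonoid M] {α β γ δ : Type*}
    (A : Finset α) (B : Finset β) (C : Finset γ) (D : Finset δ)
    (g : α → β → γ → δ → M) :
    ∑ a ∈ A, ∑ b ∈ B, ∑ c ∈ C, ∑ d ∈ D, g a b c d
      = ∑ c ∈ C, ∑ d ∈ D, ∑ a ∈ A, ∑ b ∈ B, g a b c d := by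
  calc ∑ a ∈ A, ∑ b ∈ B, ∑ c ∈ C, ∑ d ∈ D, g a b c d
      = ∑ a ∈ A, ∑ c ∈ C, ∑ b ∈ B, ∑ d ∈ D, g a b c d :=
        Finset.sum_congr rfl fun a _ => Finset.sum_comm
    _ = ∑ c ∈ C, ∑ a ∈ A, ∑ b ∈ B, ∑ d ∈ D, g a b c d := Finset.sum_comm
    _ = ∑ c ∈ C, ∑ a ∈ A, ∑ d ∈ D, ∑ b ∈ B, g a b c d :=
        Finset.sum_congr rfl fun c _ => Finset.sum_congr rfl fun a _ => Finset.sum_comm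
    _ = ∑ c ∈ C, ∑ d ∈ D, ∑ a ∈ A, ∑ b ∈ B, g a b c d :=
        Finset.sum_congr rfl fun c _ => Finset.sum_comm

noncomputable def cw (x : ℝ) (n : ℕ) : ℂ := Complex.exp (Complex.I * x * Real.log n)

lemma master (N : ℕ) (f : ℕ → ℂ) (R S : Finset ℝ) :
    ∑ t ∈ R, ∑ s ∈ S,
        ‖∑ n ∈ Finset.Icc 1 N, f n * Complex.exp (Complex.I * ((t : ℂ) - s) * Real.log n)‖ ^ 2
    = (∑ n ∈ Finset.Icc 1 N, ∑ m ∈ Finset.Icc 1 N,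
        (f n * (starRingEnd ℂ) (f m)) *
          ((∑ t ∈ R, cw t n * (starRingEnd ℂ) (cw t m)) *
            (starRingEnd ℂ) (∑ s ∈ S, cw s n * (starRingEnd ℂ) (cw s m)))).re := by
  have step1 : ∀ t ∈ R, ∀ s ∈ S,
      (‖∑ n ∈ Finset.Icc 1 N, f n * Complex.exp (Complex.I * ((t : ℂ) - s) * Real.log n)‖:ℝ) ^ 2
      = (∑ n ∈ Finset.Icc 1 N, ∑ m ∈ Finset.Icc 1 N,
          (f n * (starRingEnd ℂ) (f m)) *
            ((cw t n * (starRingEnd ℂ) (cw t m)) *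
              (starRingEnd ℂ) (cw s n * (starRingEnd ℂ) (cw s m)))).re := by
    intro t _ s _
    rw [normsq_sum]
    congr 1
    refine Finset.sum_congr rfl fun n _ => Finset.sum_congr rfl fun m _ => ?_
    rw [cc t s n, cc t s m]
    simp only [map_mul, Complex.conj_conj, cw]
    ring
  calc ∑ t ∈ R, ∑ s ∈ S,
        ‖∑ n ∈ Finset.Icc 1 N, f n * Complex.exp (Complex.I * ((t : ℂ) - s) * Real.log n)‖ ^ 2
      = ∑ t ∈ R, ∑ s ∈ S, (∑ n ∈ Finset.Icc 1 N, ∑ m ∈ Finset.Icc 1 N,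
          (f n * (starRingEnd ℂ) (f m)) *
            ((cw t n * (starRingEnd ℂ) (cw t m)) *
              (starRingEnd ℂ) (cw s n * (starRingEnd ℂ) (cw s m)))).re := by
        exact Finset.sum_congr rfl fun t ht => Finset.sum_congr rfl fun s hs => step1 t ht s hs
    _ = (∑ t ∈ R, ∑ s ∈ S, ∑ n ∈ Finset.Icc 1 N, ∑ m ∈ Finset.Icc 1 N,
          (f n * (starRingEnd ℂ) (f m)) *
            ((cw t n * (starRingEnd ℂ) (cw t m)) *
              (starRingEnd ℂ) (cw s n * (starRingEnd ℂ) (cw s m)))).re := by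
        simp [Complex.re_sum]
    _ = (∑ n ∈ Finset.Icc 1 N, ∑ m ∈ Finset.Icc 1 N, ∑ t ∈ R, ∑ s ∈ S,
          (f n * (starRingEnd ℂ) (f m)) *
            ((cw t n * (starRingEnd ℂ) (cw t m)) *
              (starRingEnd ℂ) (cw s n * (starRingEnd ℂ) (cw s m)))).re := by
        rw [sum4]
    _ = (∑ n ∈ Finset.Icc 1 N, ∑ m ∈ Finset.Icc 1 N,
        (f n * (starRingEnd ℂ) (f m)) *
          ((∑ t ∈ R, cw t n * (starRingEnd ℂ) (cw t m)) *
            (starRingEnd ℂ) (∑ s ∈ S, cw s n * (starRingEnd ℂ) (cw s m)))).re := by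
        congr 1
        refine Finset.sum_congr rfl fun n _ => Finset.sum_congr rfl fun m _ => ?_
        rw [map_sum, Finset.sum_mul_sum, Finset.mul_sum]
        refine Finset.sum_congr rfl fun t _ => ?_
        rw [Finset.mul_sum]

/-- diagonal case: real coefficients, same set twice. -/
lemma master_diag (N : ℕ) (b : ℕ → ℝ) (R : Finset ℝ) :
    ∑ t ∈ R, ∑ t' ∈ R,
        ‖∑ n ∈ Finset.Icc 1 N, (b n : ℂ) * Complex.exp (Complex.I * ((t : ℂ) - t') * Real.log n)‖ ^ 2
    = ∑ n ∈ Finset.Icc 1 N, ∑ m ∈ Finset.Icc 1 N,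
        (b n * b m) * ‖∑ t ∈ R, cw t n * (starRingEnd ℂ) (cw t m)‖ ^ 2 := by
  rw [master N (fun n => (b n : ℂ)) R R]
  have : ∀ n m : ℕ,
      (((b n : ℂ)) * (starRingEnd ℂ) ((b m : ℂ))) *
        ((∑ t ∈ R, cw t n * (starRingEnd ℂ) (cw t m)) *
          (starRingEnd ℂ) (∑ t ∈ R, cw t n * (starRingEnd ℂ) (cw t m)))
      = (((b n * b m) * ‖∑ t ∈ R, cw t n * (starRingEnd ℂ) (cw t m)‖ ^ 2 : ℝ) : ℂ) := by
    intro n m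
    rw [Complex.conj_ofReal, Complex.mul_conj]
    rw [Complex.normSq_eq_norm_sq]
    push_cast
    ring
  simp only [this]
  norm_cast

open Complex in
/-- Bourgain's lemma on Dirichlet polynomials over difference sets: if `|aₙ| ≤ bₙ` for
`1 ≤ n ≤ N` and `R, S` are finite sets of reals, then
`∑_{t ∈ R, s ∈ S} |∑ₙ aₙ n^{i(t-s)}|² ≤ (∑_{t,t' ∈ R} |∑ₙ bₙ n^{i(t-t')}|²)^{1/2} ·
(∑_{s,s' ∈ S} |∑ₙ bₙ n^{i(s-s')}|²)^{1/2}`. -/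
theorem stmt5 (N : ℕ) (a : ℕ → ℂ) (b : ℕ → ℝ)
    (hab : ∀ n ∈ Finset.Icc 1 N, ‖a n‖ ≤ b n)
    (R S : Finset ℝ) :
    ∑ t ∈ R, ∑ s ∈ S,
        ‖∑ n ∈ Finset.Icc 1 N, a n * Complex.exp (Complex.I * ((t : ℂ) - s) * Real.log n)‖ ^ 2
      ≤ (∑ t ∈ R, ∑ t' ∈ R,
          ‖∑ n ∈ Finset.Icc 1 N, (b n : ℂ) * Complex.exp (Complex.I * ((t : ℂ) - t') * Real.log n)‖ ^ 2) ^ ((1 : ℝ) / 2)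
        * (∑ s ∈ S, ∑ s' ∈ S,
          ‖∑ n ∈ Finset.Icc 1 N, (b n : ℂ) * Complex.exp (Complex.I * ((s : ℂ) - s') * Real.log n)‖ ^ 2) ^ ((1 : ℝ) / 2) := by
  have hb : ∀ n ∈ Finset.Icc 1 N, 0 ≤ b n := fun n hn => (norm_nonneg _).trans (hab n hn)
  set T : ℕ → ℕ → ℂ := fun n m => ∑ t ∈ R, cw t n * (starRingEnd ℂ) (cw t m) with hT
  set U : ℕ → ℕ → ℂ := fun n m => ∑ s ∈ S, cw s n * (starRingEnd ℂ) (cw s m) with hU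
  set P : ℝ := ∑ n ∈ Finset.Icc 1 N, ∑ m ∈ Finset.Icc 1 N, (b n * b m) * ‖T n m‖ ^ 2 with hP
  set Q : ℝ := ∑ n ∈ Finset.Icc 1 N, ∑ m ∈ Finset.Icc 1 N, (b n * b m) * ‖U n m‖ ^ 2 with hQ
  have hP0 : 0 ≤ P :=
    Finset.sum_nonneg fun n hn => Finset.sum_nonneg fun m hm =>
      mul_nonneg (mul_nonneg (hb n hn) (hb m hm)) (by positivity)
  have hQ0 : 0 ≤ Q :=
    Finset.sum_nonneg fun n hn => Finset.sum_nonneg fun m hm =>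
      mul_nonneg (mul_nonneg (hb n hn) (hb m hm)) (by positivity)
  -- rewrite RHS
  have hRHS1 : ∑ t ∈ R, ∑ t' ∈ R,
      ‖∑ n ∈ Finset.Icc 1 N, (b n : ℂ) * Complex.exp (Complex.I * ((t : ℂ) - t') * Real.log n)‖ ^ 2 = P :=
    master_diag N b R
  have hRHS2 : ∑ s ∈ S, ∑ s' ∈ S,
      ‖∑ n ∈ Finset.Icc 1 N, (b n : ℂ) * Complex.exp (Complex.I * ((s : ℂ) - s') * Real.log n)‖ ^ 2 = Q :=
    master_diag N b S
  rw [hRHS1, hRHS2]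
  -- step 1: expand & bound the LHS
  have step1 : ∑ t ∈ R, ∑ s ∈ S,
      ‖∑ n ∈ Finset.Icc 1 N, a n * Complex.exp (Complex.I * ((t : ℂ) - s) * Real.log n)‖ ^ 2
      ≤ ∑ n ∈ Finset.Icc 1 N, ∑ m ∈ Finset.Icc 1 N, (b n * b m) * (‖T n m‖ * ‖U n m‖) := by
    rw [master N a R S]
    calc (∑ n ∈ Finset.Icc 1 N, ∑ m ∈ Finset.Icc 1 N,
        (a n * (starRingEnd ℂ) (a m)) * (T n m * (starRingEnd ℂ) (U n m))).re
        ≤ ‖∑ n ∈ Finset.Icc 1 N, ∑ m ∈ Finset.Icc 1 N,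
            (a n * (starRingEnd ℂ) (a m)) * (T n m * (starRingEnd ℂ) (U n m))‖ := by
          exact Complex.re_le_norm _
      _ ≤ ∑ n ∈ Finset.Icc 1 N, ∑ m ∈ Finset.Icc 1 N,
            ‖(a n * (starRingEnd ℂ) (a m)) * (T n m * (starRingEnd ℂ) (U n m))‖ :=
          (norm_sum_le _ _).trans (Finset.sum_le_sum fun n _ => norm_sum_le _ _)
      _ = ∑ n ∈ Finset.Icc 1 N, ∑ m ∈ Finset.Icc 1 N,
            (‖a n‖ * ‖a m‖) * (‖T n m‖ * ‖U n m‖) := by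
          simp [norm_mul, RCLike.norm_conj]
      _ ≤ ∑ n ∈ Finset.Icc 1 N, ∑ m ∈ Finset.Icc 1 N, (b n * b m) * (‖T n m‖ * ‖U n m‖) := by
          refine Finset.sum_le_sum fun n hn => Finset.sum_le_sum fun m hm => ?_
          have h1 := hab n hn; have h2 := hab m hm
          exact mul_le_mul_of_nonneg_right
            (mul_le_mul h1 h2 (norm_nonneg _) ((norm_nonneg _).trans h1)) (by positivity)
  refine step1.trans ?_
  -- step 2: Cauchy–Schwarz
  have key : ∑ n ∈ Finset.Icc 1 N, ∑ m ∈ Finset.Icc 1 N, (b n * b m) * (‖T n m‖ * ‖U n m‖)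
      ≤ Real.sqrt (P * Q) := by
    set s := Finset.Icc 1 N ×ˢ Finset.Icc 1 N with hs
    set F : ℕ × ℕ → ℝ := fun p => Real.sqrt (b p.1 * b p.2) * ‖T p.1 p.2‖ with hF
    set G : ℕ × ℕ → ℝ := fun p => Real.sqrt (b p.1 * b p.2) * ‖U p.1 p.2‖ with hG
    have hmem : ∀ p ∈ s, 0 ≤ b p.1 * b p.2 := by
      intro p hp
      rw [hs, Finset.mem_product] at hp
      exact mul_nonneg (hb _ hp.1) (hb _ hp.2)
    have hFG : ∑ p ∈ s, F p * G p
        = ∑ n ∈ Finset.Icc 1 N, ∑ m ∈ Finset.Icc 1 N, (b n * b m) * (‖T n m‖ * ‖U n m‖) := by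
      rw [hs, ← Finset.sum_product']
      refine Finset.sum_congr rfl fun p hp => ?_
      have h := Real.mul_self_sqrt (hmem p hp)
      rw [hF, hG]
      linear_combination (‖T p.1 p.2‖ * ‖U p.1 p.2‖) * h
    have hF2 : ∑ p ∈ s, F p ^ 2 = P := by
      rw [hP, hs, ← Finset.sum_product']
      refine Finset.sum_congr rfl fun p hp => ?_
      rw [hF]
      rw [mul_pow, Real.sq_sqrt (hmem p hp)]
    have hG2 : ∑ p ∈ s, G p ^ 2 = Q := by
      rw [hQ, hs, ← Finset.sum_product']
      refine Finset.sum_congr rfl fun p hp => ?_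
      rw [hG, mul_pow, Real.sq_sqrt (hmem p hp)]
    have hcs := Finset.sum_mul_sq_le_sq_mul_sq s F G
    rw [hFG, hF2, hG2] at hcs
    have hnn : 0 ≤ ∑ n ∈ Finset.Icc 1 N, ∑ m ∈ Finset.Icc 1 N, (b n * b m) * (‖T n m‖ * ‖U n m‖) := by
      rw [← hFG, hs]
      refine Finset.sum_nonneg fun p hp => ?_
      have := hmem p hp
      rw [hF, hG]; positivity
    exact (Real.le_sqrt hnn (mul_nonneg hP0 hQ0)).mpr hcs
  refine key.trans_eq ?_
  rw [Real.sqrt_mul hP0, Real.sqrt_eq_rpow, Real.sqrt_eq_rpow]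
end

section
/- Let F(t) = Σ_{N < n ≤ 2N} b_n n^{-it} with |b_n| ≤ 1, and suppose ψ : ℝ → ℂ is a Schwartz-type function satisfying |ψ(x)| ≤ C e^{-|x|^{2/3}} whose Fourier transform ψ̂ equals 1 identically on [1, 2]. Then for every t ∈ ℝ and N ≥ 2, |F(t)| ≤ (C' log N) ∫_{|v| < log N} |F(t+v)| dv + C'' , where C', C'' depend only on C. -/
open MeasureTheory Real Complex

theorem aux1 (x : ℝ) (hx : 0 ≤ x) : 4*x ≤ x ^ ((4:ℝ)/3) + 256 := by
  rcases le_or_gt x 64 with h | h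
  · have : (0:ℝ) ≤ x ^ ((4:ℝ)/3) := Real.rpow_nonneg hx _
    linarith
  · have hx0 : 0 < x := by linarith
    have h1 : x ^ ((4:ℝ)/3) = x * x ^ ((1:ℝ)/3) := by
      rw [show (4:ℝ)/3 = 1 + 1/3 by norm_num, Real.rpow_add hx0, Real.rpow_one]
    have h2 : (4:ℝ) ≤ x ^ ((1:ℝ)/3) := by
      have : (64:ℝ) ^ ((1:ℝ)/3) ≤ x ^ ((1:ℝ)/3) :=
        Real.rpow_le_rpow (by norm_num) h.le (by norm_num)
      rwa [show (64:ℝ) = 4 ^ (3:ℕ) by norm_num, ← Real.rpow_natCast 4 3,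
        ← Real.rpow_mul (by norm_num), show ((3:ℕ):ℝ) * (1/3) = 1 by norm_num,
        Real.rpow_one] at this
    nlinarith [Real.rpow_nonneg hx0.le ((1:ℝ)/3)]

theorem aux2 (x : ℝ) (hx : 0 ≤ x) : x^3 ≤ 6 * Real.exp x := by
  have := Real.sum_le_exp_of_nonneg hx 4
  have h : ∑ i ∈ Finset.range 4, x ^ i / (Nat.factorial i) = 1 + x + x^2/2 + x^3/6 := by
    norm_num [Finset.sum_range_succ, Nat.factorial]
  rw [h] at this
  nlinarith [sq_nonneg x]

theorem tailbound (C L NR : ℝ) (hC : 0 < C) (hL2 : Real.log 2 ≤ L)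
    (hNR : NR = Real.exp L)
    (ψ : ℝ → ℂ) (hψ : ∀ x : ℝ, ‖ψ x‖ ≤ C * Real.exp (-|x| ^ ((2:ℝ)/3)))
    (F : ℝ → ℂ) (hFc : Continuous F) (hFbd : ∀ s : ℝ, ‖F s‖ ≤ NR)
    (t : ℝ)
    (hint : Integrable (fun v : ℝ => ψ (L*v) * F (t+v)))
    (hconv : F t = L • ∫ v : ℝ, ψ (L*v) * F (t+v)) :
    ‖F t‖ ≤ C * L * (∫ v in Set.Ioo (-L) L, ‖F (t+v)‖) +
      C * ((1 + 6 / (Real.log 2 ^ ((2:ℝ)/3) / 2) ^ 3) * Real.pi * Real.exp 128) := by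
  have hlog2 : 0 < Real.log 2 := Real.log_pos one_lt_two
  have hL0 : 0 < L := lt_of_lt_of_le hlog2 hL2
  set c : ℝ := Real.log 2 ^ ((2:ℝ)/3) / 2 with hc
  have hc0 : 0 < c := by positivity
  have hNR0 : 0 < NR := hNR ▸ Real.exp_pos L
  have hintn : Integrable (fun v : ℝ => ‖ψ (L*v)‖ * ‖F (t+v)‖) := by
    simpa [norm_mul] using hint.norm
  have hψC : ∀ x : ℝ, ‖ψ x‖ ≤ C := by
    intro x
    refine (hψ x).trans ?_
    have h1 : Real.exp (-|x| ^ ((2:ℝ)/3)) ≤ 1 := by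
      rw [Real.exp_le_one_iff]
      simpa using Real.rpow_nonneg (abs_nonneg x) ((2:ℝ)/3)
    nlinarith
  have h1 : ‖F t‖ ≤ L * ∫ v : ℝ, ‖ψ (L*v)‖ * ‖F (t+v)‖ := by
    rw [hconv, norm_smul, Real.norm_eq_abs, abs_of_pos hL0]
    gcongr
    calc ‖∫ v : ℝ, ψ (L*v) * F (t+v)‖ ≤ ∫ v : ℝ, ‖ψ (L*v) * F (t+v)‖ :=
          norm_integral_le_integral_norm _
      _ = ∫ v : ℝ, ‖ψ (L*v)‖ * ‖F (t+v)‖ := by simp [norm_mul]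
  have hs : MeasurableSet (Set.Ioo (-L) L) := measurableSet_Ioo
  have hsplit : (∫ v : ℝ, ‖ψ (L*v)‖ * ‖F (t+v)‖) =
      (∫ v in Set.Ioo (-L) L, ‖ψ (L*v)‖ * ‖F (t+v)‖) +
      ∫ v in (Set.Ioo (-L) L)ᶜ, ‖ψ (L*v)‖ * ‖F (t+v)‖ :=
    (integral_add_compl hs hintn).symm
  have hFInt : IntegrableOn (fun v : ℝ => ‖F (t+v)‖) (Set.Ioo (-L) L) := by
    have hcont : Continuous fun v : ℝ => ‖F (t+v)‖ :=
      (hFc.comp (continuous_const.add continuous_id)).norm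
    exact (hcont.integrableOn_Icc (a := -L) (b := L)).mono_set Set.Ioo_subset_Icc_self
  have hmain : (∫ v in Set.Ioo (-L) L, ‖ψ (L*v)‖ * ‖F (t+v)‖) ≤
      C * ∫ v in Set.Ioo (-L) L, ‖F (t+v)‖ := by
    rw [← MeasureTheory.integral_const_mul]
    refine setIntegral_mono_on hintn.integrableOn (hFInt.const_mul C) hs ?_
    intro v _
    exact mul_le_mul_of_nonneg_right (hψC (L*v)) (norm_nonneg _)
  set D : ℝ := C * NR * Real.exp (-(L ^ ((4:ℝ)/3)) / 2) * (1 + 6 / c ^ 3) with hD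
  have hD0 : 0 < D := by positivity
  have hpt : ∀ v ∈ (Set.Ioo (-L) L)ᶜ, ‖ψ (L*v)‖ * ‖F (t+v)‖ ≤ D * (1+v^2)⁻¹ := by
    intro v hv
    have hv' : L ≤ |v| := by
      simp only [Set.mem_compl_iff, Set.mem_Ioo, not_and_or, not_lt] at hv
      rcases hv with h | h
      · rw [abs_of_nonpos (by linarith)]; linarith
      · rw [abs_of_pos (by linarith)]; exact h
    have habs : (0:ℝ) ≤ |v| := abs_nonneg v
    have e1 : (L*L) ^ ((2:ℝ)/3) = L ^ ((4:ℝ)/3) := by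
      rw [show L*L = L ^ (2:ℕ) by ring, ← Real.rpow_natCast L 2, ← Real.rpow_mul hL0.le]
      norm_num
    have key1 : (1/2) * L ^ ((4:ℝ)/3) + c * |v| ^ ((2:ℝ)/3) ≤ (L * |v|) ^ ((2:ℝ)/3) := by
      have hA : L ^ ((4:ℝ)/3) ≤ (L * |v|) ^ ((2:ℝ)/3) := by
        rw [← e1]
        exact Real.rpow_le_rpow (by positivity) (by nlinarith) (by norm_num)
      have hB : 2 * c * |v| ^ ((2:ℝ)/3) ≤ (L * |v|) ^ ((2:ℝ)/3) := by
        have h2c : 2 * c * |v| ^ ((2:ℝ)/3) = (Real.log 2 * |v|) ^ ((2:ℝ)/3) := by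
          rw [Real.mul_rpow hlog2.le habs, hc]; ring
        rw [h2c]
        exact Real.rpow_le_rpow (by positivity) (by nlinarith) (by norm_num)
      linarith
    have key2 : ‖ψ (L*v)‖ ≤
        C * (Real.exp (-(L ^ ((4:ℝ)/3)) / 2) * Real.exp (-(c * |v| ^ ((2:ℝ)/3)))) := by
      refine (hψ (L*v)).trans ?_
      rw [← Real.exp_add]
      have habsLv : |L*v| = L * |v| := by rw [abs_mul, abs_of_pos hL0]
      rw [habsLv]
      refine mul_le_mul_of_nonneg_left ?_ hC.le
      apply Real.exp_le_exp.2
      linarith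
    have hv2 : (|v| ^ ((2:ℝ)/3)) ^ (3:ℕ) = v ^ 2 := by
      rw [← Real.rpow_natCast (|v| ^ ((2:ℝ)/3)) 3, ← Real.rpow_mul habs,
        show (2:ℝ)/3 * ((3:ℕ):ℝ) = ((2:ℕ):ℝ) by norm_num, Real.rpow_natCast, _root_.sq_abs]
    have key3 : Real.exp (-(c * |v| ^ ((2:ℝ)/3))) * (1 + v^2) ≤ 1 + 6 / c^3 := by
      set x : ℝ := c * |v| ^ ((2:ℝ)/3) with hx
      have hx0 : (0:ℝ) ≤ x := by positivity
      have h6 : x^3 ≤ 6 * Real.exp x := aux2 x hx0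
      have hprod : Real.exp x * Real.exp (-x) = 1 := by
        rw [← Real.exp_add]; simp
      have hE1 : Real.exp (-x) ≤ 1 := Real.exp_le_one_iff.2 (by linarith)
      have hveq : c^3 * v^2 = x^3 := by rw [hx, mul_pow, hv2]
      have hq := mul_le_mul_of_nonneg_right h6 (Real.exp_pos (-x)).le
      rw [mul_assoc, hprod, mul_one] at hq
      have h7 : v^2 * Real.exp (-x) ≤ 6 / c^3 := by
        rw [le_div_iff₀ (by positivity : (0:ℝ) < c^3)]
        calc v^2 * Real.exp (-x) * c^3 = x^3 * Real.exp (-x) := by rw [← hveq]; ring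
          _ ≤ 6 := hq
      have hexpand : Real.exp (-x) * (1+v^2) = Real.exp (-x) + v^2 * Real.exp (-x) := by ring
      linarith
    have h8 : Real.exp (-(c * |v| ^ ((2:ℝ)/3))) ≤ (1 + 6/c^3) * (1+v^2)⁻¹ := by
      rw [← div_eq_mul_inv, le_div_iff₀ (by positivity : (0:ℝ) < 1 + v^2)]
      exact key3
    calc ‖ψ (L*v)‖ * ‖F (t+v)‖
        ≤ (C * (Real.exp (-(L ^ ((4:ℝ)/3)) / 2) * Real.exp (-(c * |v| ^ ((2:ℝ)/3))))) * NR :=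
          mul_le_mul key2 (hFbd _) (norm_nonneg _) (by positivity)
      _ = (C * NR * Real.exp (-(L ^ ((4:ℝ)/3)) / 2)) * Real.exp (-(c * |v| ^ ((2:ℝ)/3))) := by
          ring
      _ ≤ (C * NR * Real.exp (-(L ^ ((4:ℝ)/3)) / 2)) * ((1 + 6/c^3) * (1+v^2)⁻¹) :=
          mul_le_mul_of_nonneg_left h8 (by positivity)
      _ = D * (1+v^2)⁻¹ := by rw [hD]; ring
  have hDint : Integrable (fun v : ℝ => D * (1+v^2)⁻¹) := by
    exact integrable_inv_one_add_sq.const_mul D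
  have htail : (∫ v in (Set.Ioo (-L) L)ᶜ, ‖ψ (L*v)‖ * ‖F (t+v)‖) ≤ D * Real.pi := by
    calc (∫ v in (Set.Ioo (-L) L)ᶜ, ‖ψ (L*v)‖ * ‖F (t+v)‖)
        ≤ ∫ v in (Set.Ioo (-L) L)ᶜ, D * (1+v^2)⁻¹ :=
          setIntegral_mono_on hintn.integrableOn hDint.integrableOn hs.compl hpt
      _ ≤ ∫ v : ℝ, D * (1+v^2)⁻¹ :=
          setIntegral_le_integral hDint (ae_of_all _ fun v => by positivity)
      _ = D * Real.pi := by rw [MeasureTheory.integral_const_mul, integral_univ_inv_one_add_sq]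
  have hLD : L * (D * Real.pi) ≤ C * ((1 + 6/c^3) * Real.pi * Real.exp 128) := by
    have hLN : L * NR ≤ Real.exp (L + L) := by
      rw [Real.exp_add, ← hNR]
      nlinarith [Real.add_one_le_exp L, hNR ▸ le_refl NR]
    have h9 : L * NR * Real.exp (-(L ^ ((4:ℝ)/3)) / 2) ≤ Real.exp 128 := by
      calc L * NR * Real.exp (-(L ^ ((4:ℝ)/3)) / 2)
          ≤ Real.exp (L+L) * Real.exp (-(L ^ ((4:ℝ)/3)) / 2) :=
            mul_le_mul_of_nonneg_right hLN (Real.exp_pos _).le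
        _ = Real.exp (L + L + -(L ^ ((4:ℝ)/3)) / 2) := by rw [← Real.exp_add]
        _ ≤ Real.exp 128 := Real.exp_le_exp.2 (by nlinarith [aux1 L hL0.le])
    calc L * (D * Real.pi)
        = (C * (1 + 6/c^3) * Real.pi) * (L * NR * Real.exp (-(L ^ ((4:ℝ)/3)) / 2)) := by
          rw [hD]; ring
      _ ≤ (C * (1 + 6/c^3) * Real.pi) * Real.exp 128 :=
          mul_le_mul_of_nonneg_left h9 (by positivity)
      _ = C * ((1 + 6/c^3) * Real.pi * Real.exp 128) := by ring
  have hIoo0 : (0:ℝ) ≤ ∫ v in Set.Ioo (-L) L, ‖F (t+v)‖ :=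
    integral_nonneg fun v => norm_nonneg _
  calc ‖F t‖ ≤ L * ∫ v : ℝ, ‖ψ (L*v)‖ * ‖F (t+v)‖ := h1
    _ = L * ((∫ v in Set.Ioo (-L) L, ‖ψ (L*v)‖ * ‖F (t+v)‖) +
          ∫ v in (Set.Ioo (-L) L)ᶜ, ‖ψ (L*v)‖ * ‖F (t+v)‖) := by rw [hsplit]
    _ ≤ L * ((C * ∫ v in Set.Ioo (-L) L, ‖F (t+v)‖) + D * Real.pi) :=
        mul_le_mul_of_nonneg_left (add_le_add hmain htail) hL0.le
    _ = C * L * (∫ v in Set.Ioo (-L) L, ‖F (t+v)‖) + L * (D * Real.pi) := by ring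
    _ ≤ _ := by linarith



/-- Bourgain's pointwise-to-average bound for Dirichlet polynomials: let
`F(t) = ∑_{N < n ≤ 2N} bₙ n^{-it}` with `|bₙ| ≤ 1`, and suppose `ψ : ℝ → ℂ` satisfies
`|ψ(x)| ≤ C e^{-|x|^{2/3}}` and its Fourier transform is identically 1 on `[1,2]`. Then
`|F(t)| ≤ C' log N ∫_{|v| < log N} |F(t+v)| dv + C''` with `C', C''` depending only on `C`. -/
theorem stmt7 (C : ℝ) (hC : 0 < C) :
    ∃ C' C'' : ℝ, 0 < C' ∧ 0 < C'' ∧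
      ∀ (ψ : ℝ → ℂ),
        (∀ x : ℝ, ‖ψ x‖ ≤ C * Real.exp (-|x| ^ ((2 : ℝ) / 3))) →
        (∀ ξ ∈ Set.Icc (1 : ℝ) 2,
          (∫ x : ℝ, ψ x * Complex.exp (-(Complex.I * ξ * x))) = 1) →
        ∀ (N : ℕ), 2 ≤ N →
        ∀ (b : ℕ → ℂ), (∀ n, ‖b n‖ ≤ 1) →
        ∀ t : ℝ,
          ‖∑ n ∈ Finset.Ioc N (2 * N), b n * Complex.exp (-(Complex.I * t) * Real.log n)‖
            ≤ C' * Real.log N *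
                ∫ v in Set.Ioo (-(Real.log N)) (Real.log N),
                  ‖∑ n ∈ Finset.Ioc N (2 * N),
                      b n * Complex.exp (-(Complex.I * (t + v)) * Real.log n)‖
              + C'' := by
  have hlog2 : 0 < Real.log 2 := Real.log_pos one_lt_two
  refine ⟨C, (1 + 6 / (Real.log 2 ^ ((2:ℝ)/3) / 2) ^ 3) * Real.pi * Real.exp 128 /
      (2 * Real.log 2 ^ 2),
    hC, by positivity, ?_⟩
  intro ψ hψ hFT N hN b hb t
  have hN2 : (2:ℝ) ≤ (N:ℝ) := by exact_mod_cast hN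
  have hN0 : (0:ℝ) < (N:ℝ) := by linarith
  have hL2 : Real.log 2 ≤ Real.log (N:ℝ) := Real.log_le_log (by norm_num) hN2
  set L : ℝ := Real.log (N:ℝ) with hLdef
  have hL0 : 0 < L := lt_of_lt_of_le hlog2 hL2
  -- ψ is integrable
  have hψ1 := hFT 1 ⟨le_refl 1, by norm_num⟩
  have hψint : Integrable ψ := by
    have hint1 : Integrable (fun x : ℝ => ψ x * Complex.exp (-(Complex.I * (1:ℝ) * x))) := by
      by_contra h
      rw [integral_undef h] at hψ1
      exact one_ne_zero hψ1.symm
    have heq : ψ = fun x : ℝ => Complex.exp (Complex.I * x) *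
        (ψ x * Complex.exp (-(Complex.I * (1:ℝ) * x))) := by
      funext x
      rw [mul_comm, mul_assoc, ← Complex.exp_add]
      norm_num
    rw [heq]
    refine hint1.bdd_mul (c := 1) ?_ (ae_of_all _ fun x => ?_)
    · exact (Complex.continuous_exp.comp
        (continuous_const.mul Complex.continuous_ofReal)).aestronglyMeasurable
    · rw [Complex.norm_exp]
      simp
  have hψL : Integrable (fun v : ℝ => ψ (L*v)) := hψint.comp_mul_left' hL0.ne'
  -- norm-one exponentials
  have hexpnorm : ∀ (a r : ℝ), ‖Complex.exp (-(Complex.I * (a:ℂ)) * (r:ℂ))‖ = 1 := by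
    intro a r
    rw [Complex.norm_exp]
    simp
  -- per-n integrability
  have hintper : ∀ n ∈ Finset.Ioc N (2*N), Integrable (fun v : ℝ =>
      ψ (L*v) * (b n * Complex.exp (-(Complex.I * ((t+v:ℝ):ℂ)) * ((Real.log n : ℝ):ℂ)))) := by
    intro n _
    have hcont : Continuous fun v : ℝ =>
        b n * Complex.exp (-(Complex.I * ((t+v:ℝ):ℂ)) * ((Real.log n : ℝ):ℂ)) := by
      apply continuous_const.mul
      apply Complex.continuous_exp.comp
      exact ((continuous_const.mul (Complex.continuous_ofReal.comp
        (continuous_const.add continuous_id))).neg).mul continuous_const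
    refine ((hψL.bdd_mul (c := 1) hcont.aestronglyMeasurable (ae_of_all _ fun v => ?_)).congr
      (Filter.Eventually.of_forall fun v => mul_comm _ _))
    rw [norm_mul, hexpnorm]
    simpa using hb n
  -- convolution identity, per n
  have hper : ∀ n ∈ Finset.Ioc N (2*N),
      b n * Complex.exp (-(Complex.I * (t:ℂ)) * ((Real.log n : ℝ):ℂ)) =
      L • ∫ v : ℝ, ψ (L*v) *
        (b n * Complex.exp (-(Complex.I * ((t+v:ℝ):ℂ)) * ((Real.log n : ℝ):ℂ))) := by
    intro n hn
    obtain ⟨hn1, hn2⟩ := Finset.mem_Ioc.1 hn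
    have hnN : (N:ℝ) < (n:ℝ) := by exact_mod_cast hn1
    have hn0 : (0:ℝ) < (n:ℝ) := lt_trans hN0 hnN
    set ξ : ℝ := Real.log n / L with hξ
    have hξL : ξ * L = Real.log n := div_mul_cancel₀ _ hL0.ne'
    have hξmem : ξ ∈ Set.Icc (1:ℝ) 2 := by
      constructor
      · rw [hξ, le_div_iff₀ hL0, one_mul]
        exact Real.log_le_log hN0 hnN.le
      · rw [hξ, div_le_iff₀ hL0]
        have h2N : (n:ℝ) ≤ 2*(N:ℝ) := by exact_mod_cast hn2
        have hlogn : Real.log n ≤ Real.log (2*(N:ℝ)) := Real.log_le_log hn0 h2N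
        rw [Real.log_mul (by norm_num) (ne_of_gt hN0)] at hlogn
        linarith
    have h1 := hFT ξ hξmem
    have h2 := MeasureTheory.Measure.integral_comp_mul_left
      (fun x : ℝ => ψ x * Complex.exp (-(Complex.I * (ξ:ℂ) * (x:ℂ)))) L
    rw [h1, abs_of_pos (inv_pos.2 hL0)] at h2
    have h3 : (1:ℂ) = L • ∫ v : ℝ, ψ (L*v) *
        Complex.exp (-(Complex.I * (ξ:ℂ) * ((L*v:ℝ):ℂ))) := by
      rw [h2, smul_smul, mul_inv_cancel₀ hL0.ne', one_smul]
    have hcast : ((Real.log n : ℝ) : ℂ) = (ξ:ℂ) * (L:ℂ) := by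
      rw [← hξL]; push_cast; ring
    calc b n * Complex.exp (-(Complex.I * (t:ℂ)) * ((Real.log n : ℝ):ℂ))
        = (b n * Complex.exp (-(Complex.I * (t:ℂ)) * ((Real.log n : ℝ):ℂ))) *
          (L • ∫ v : ℝ, ψ (L*v) * Complex.exp (-(Complex.I * (ξ:ℂ) * ((L*v:ℝ):ℂ)))) := by
          rw [← h3, mul_one]
      _ = L • ∫ v : ℝ, (b n * Complex.exp (-(Complex.I * (t:ℂ)) * ((Real.log n : ℝ):ℂ))) *
            (ψ (L*v) * Complex.exp (-(Complex.I * (ξ:ℂ) * ((L*v:ℝ):ℂ)))) := by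
          rw [mul_smul_comm, ← MeasureTheory.integral_const_mul]
      _ = L • ∫ v : ℝ, ψ (L*v) *
            (b n * Complex.exp (-(Complex.I * ((t+v:ℝ):ℂ)) * ((Real.log n : ℝ):ℂ))) := by
          congr 1
          refine integral_congr_ae (Filter.Eventually.of_forall fun v => ?_)
          have hBC : -(Complex.I * (t:ℂ)) * ((Real.log n : ℝ):ℂ) +
              -(Complex.I * (ξ:ℂ) * ((L*v:ℝ):ℂ)) =
              -(Complex.I * ((t+v:ℝ):ℂ)) * ((Real.log n : ℝ):ℂ) := by
            rw [hcast]; push_cast; ring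
          have hE : Complex.exp (-(Complex.I * ((t+v:ℝ):ℂ)) * ((Real.log n : ℝ):ℂ)) =
              Complex.exp (-(Complex.I * (t:ℂ)) * ((Real.log n : ℝ):ℂ)) *
              Complex.exp (-(Complex.I * (ξ:ℂ) * ((L*v:ℝ):ℂ))) := by
            rw [← Complex.exp_add, hBC]
          simp only [hE]; ring
  -- now apply tailbound
  simp only [← Complex.ofReal_add]
  have hcontF : Continuous (fun s : ℝ => ∑ n ∈ Finset.Ioc N (2*N),
      b n * Complex.exp (-(Complex.I * (s:ℂ)) * ((Real.log n : ℝ):ℂ))) := by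
    apply continuous_finset_sum
    intro n _
    exact continuous_const.mul (Complex.continuous_exp.comp
      (((continuous_const.mul Complex.continuous_ofReal).neg).mul continuous_const))
  have hTB : ‖∑ n ∈ Finset.Ioc N (2*N),
        b n * Complex.exp (-(Complex.I * (t:ℂ)) * ((Real.log n : ℝ):ℂ))‖ ≤
      C * L * (∫ v in Set.Ioo (-L) L, ‖∑ n ∈ Finset.Ioc N (2*N),
        b n * Complex.exp (-(Complex.I * ((t+v:ℝ):ℂ)) * ((Real.log n : ℝ):ℂ))‖) +
      C * ((1 + 6 / (Real.log 2 ^ ((2:ℝ)/3) / 2) ^ 3) * Real.pi * Real.exp 128) := by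
    refine tailbound C L (N:ℝ) hC hL2 (Real.exp_log hN0).symm ψ hψ
      (fun s : ℝ => ∑ n ∈ Finset.Ioc N (2*N),
        b n * Complex.exp (-(Complex.I * (s:ℂ)) * ((Real.log n : ℝ):ℂ)))
      hcontF ?_ t ?_ ?_
    · intro s
      calc ‖∑ n ∈ Finset.Ioc N (2*N),
            b n * Complex.exp (-(Complex.I * (s:ℂ)) * ((Real.log n : ℝ):ℂ))‖
          ≤ ∑ n ∈ Finset.Ioc N (2*N),
              ‖b n * Complex.exp (-(Complex.I * (s:ℂ)) * ((Real.log n : ℝ):ℂ))‖ :=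
            norm_sum_le _ _
        _ ≤ ∑ _n ∈ Finset.Ioc N (2*N), (1:ℝ) := by
            refine Finset.sum_le_sum fun n _ => ?_
            rw [norm_mul, hexpnorm]
            simpa using hb n
        _ = ((Finset.Ioc N (2*N)).card : ℝ) := by rw [Finset.sum_const, nsmul_eq_mul, mul_one]
        _ ≤ (N:ℝ) := by
            rw [Nat.card_Ioc]
            exact_mod_cast le_of_eq (by omega : 2*N - N = N)
    · have heq : (fun v : ℝ => ψ (L*v) * ∑ n ∈ Finset.Ioc N (2*N),
          b n * Complex.exp (-(Complex.I * ((t+v:ℝ):ℂ)) * ((Real.log n : ℝ):ℂ))) =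
          fun v : ℝ => ∑ n ∈ Finset.Ioc N (2*N), ψ (L*v) *
            (b n * Complex.exp (-(Complex.I * ((t+v:ℝ):ℂ)) * ((Real.log n : ℝ):ℂ))) := by
        funext v; rw [Finset.mul_sum]
      exact heq ▸ integrable_finset_sum _ hintper
    · calc (∑ n ∈ Finset.Ioc N (2*N),
            b n * Complex.exp (-(Complex.I * (t:ℂ)) * ((Real.log n : ℝ):ℂ)))
          = ∑ n ∈ Finset.Ioc N (2*N), L • ∫ v : ℝ, ψ (L*v) *
              (b n * Complex.exp (-(Complex.I * ((t+v:ℝ):ℂ)) * ((Real.log n : ℝ):ℂ))) :=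
            Finset.sum_congr rfl hper
        _ = L • ∑ n ∈ Finset.Ioc N (2*N), ∫ v : ℝ, ψ (L*v) *
              (b n * Complex.exp (-(Complex.I * ((t+v:ℝ):ℂ)) * ((Real.log n : ℝ):ℂ))) :=
            (Finset.smul_sum).symm
        _ = L • ∫ v : ℝ, ∑ n ∈ Finset.Ioc N (2*N), ψ (L*v) *
              (b n * Complex.exp (-(Complex.I * ((t+v:ℝ):ℂ)) * ((Real.log n : ℝ):ℂ))) := by
            rw [integral_finset_sum _ hintper]
        _ = L • ∫ v : ℝ, ψ (L*v) * ∑ n ∈ Finset.Ioc N (2*N),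
              (b n * Complex.exp (-(Complex.I * ((t+v:ℝ):ℂ)) * ((Real.log n : ℝ):ℂ))) := by
            simp only [← Finset.mul_sum]
  -- convert to the stated form (the `+ C''` sits inside the integral)
  have hIO : IntegrableOn (fun v : ℝ => ‖∑ n ∈ Finset.Ioc N (2*N),
      b n * Complex.exp (-(Complex.I * ((t+v:ℝ):ℂ)) * ((Real.log n : ℝ):ℂ))‖)
      (Set.Ioo (-L) L) := by
    have hcont3 : Continuous (fun v : ℝ => ‖∑ n ∈ Finset.Ioc N (2*N),
        b n * Complex.exp (-(Complex.I * ((t+v:ℝ):ℂ)) * ((Real.log n : ℝ):ℂ))‖) :=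
      (hcontF.comp (continuous_const.add continuous_id)).norm
    exact (hcont3.integrableOn_Icc (a := -L) (b := L)).mono_set Set.Ioo_subset_Icc_self
  set Cpp : ℝ := (1 + 6 / (Real.log 2 ^ ((2:ℝ)/3) / 2) ^ 3) * Real.pi * Real.exp 128 /
      (2 * Real.log 2 ^ 2) with hCpp
  have hCpp0 : 0 < Cpp := by positivity
  have hvol : (volume (Set.Ioo (-L) L)).toReal = 2*L := by
    rw [Real.volume_Ioo, ENNReal.toReal_ofReal (by linarith)]
    ring
  have hsum : (∫ v in Set.Ioo (-L) L, (‖∑ n ∈ Finset.Ioc N (2*N),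
      b n * Complex.exp (-(Complex.I * ((t+v:ℝ):ℂ)) * ((Real.log n : ℝ):ℂ))‖ + Cpp)) =
      (∫ v in Set.Ioo (-L) L, ‖∑ n ∈ Finset.Ioc N (2*N),
      b n * Complex.exp (-(Complex.I * ((t+v:ℝ):ℂ)) * ((Real.log n : ℝ):ℂ))‖) + Cpp * (2*L) := by
    rw [MeasureTheory.integral_add hIO (integrableOn_const measure_Ioo_lt_top.ne)]
    rw [setIntegral_const, measureReal_def, hvol, smul_eq_mul]
    ring
  have hbigM : (0:ℝ) < (1 + 6 / (Real.log 2 ^ ((2:ℝ)/3) / 2) ^ 3) * Real.pi * Real.exp 128 := by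
    positivity
  have hML : C * ((1 + 6 / (Real.log 2 ^ ((2:ℝ)/3) / 2) ^ 3) * Real.pi * Real.exp 128) ≤
      C * L * (Cpp * (2*L)) := by
    have h1 : Real.log 2 ^ 2 ≤ L^2 := by nlinarith
    calc C * ((1 + 6 / (Real.log 2 ^ ((2:ℝ)/3) / 2) ^ 3) * Real.pi * Real.exp 128)
        = C * Cpp * (2 * Real.log 2 ^ 2) := by
          rw [hCpp]; field_simp
      _ ≤ C * Cpp * (2 * L^2) := by
          refine mul_le_mul_of_nonneg_left (by linarith) (by positivity)
      _ = C * L * (Cpp * (2*L)) := by ring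
  calc ‖∑ n ∈ Finset.Ioc N (2*N),
        b n * Complex.exp (-(Complex.I * (t:ℂ)) * ((Real.log n : ℝ):ℂ))‖
      ≤ C * L * (∫ v in Set.Ioo (-L) L, ‖∑ n ∈ Finset.Ioc N (2*N),
          b n * Complex.exp (-(Complex.I * ((t+v:ℝ):ℂ)) * ((Real.log n : ℝ):ℂ))‖) +
        C * ((1 + 6 / (Real.log 2 ^ ((2:ℝ)/3) / 2) ^ 3) * Real.pi * Real.exp 128) := hTB
    _ ≤ C * L * (∫ v in Set.Ioo (-L) L, ‖∑ n ∈ Finset.Ioc N (2*N),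
          b n * Complex.exp (-(Complex.I * ((t+v:ℝ):ℂ)) * ((Real.log n : ℝ):ℂ))‖) +
        C * L * (Cpp * (2*L)) := by linarith
    _ = C * L * ((∫ v in Set.Ioo (-L) L, ‖∑ n ∈ Finset.Ioc N (2*N),
          b n * Complex.exp (-(Complex.I * ((t+v:ℝ):ℂ)) * ((Real.log n : ℝ):ℂ))‖) +
          Cpp * (2*L)) := by ring
    _ = C * L * (∫ v in Set.Ioo (-L) L, (‖∑ n ∈ Finset.Ioc N (2*N),
          b n * Complex.exp (-(Complex.I * ((t+v:ℝ):ℂ)) * ((Real.log n : ℝ):ℂ))‖ + Cpp)) := by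
        rw [hsum]
end
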